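/- Let B be a Rota–Baxter operator of weight λ on a Lie algebra g over a field and let τ : g → g be a Lie algebra automorphism. Define τ̃ : g × Dual(g) → g × Dual(g) by τ̃(x,ξ) := (τx, −ξ∘τ). Then τ̃ is a reflection on the quadratic Rota–Baxter Lie algebra (g ⋉_{ad*} Dual(g), B̃, 𝒮) — meaning that τ̃ preserves the semidirect bracket, (τ̃−id)∘(B̃+λ·id)∘(τ̃+id) = 0, and 𝒮(τ̃a,b) + 𝒮(a,τ̃b) = 0 for all a,b — if and only if τ is a reflection on the Rota–Baxter Lie algebra (g,B), i.e. τ⁅τx,y⁆ = ⁅x,τy⁆ for all x,y, λ·(τ∘τ − id) = 0, and τ∘B∘τ − B + τ∘B − B∘τ = 0. -/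
import Mathlib


variable {K : Type*} [Field K] {g : Type*} [LieRing g] [LieAlgebra K g]

/-- Coadjoint action `ad*_x ξ = −ξ ∘ (ad x)` on the dual space. -/
noncomputable def coad (x : g) (ξ : Module.Dual K g) : Module.Dual K g :=
  -(ξ ∘ₗ (LieAlgebra.ad K g x : g →ₗ[K] g))

/-- The semidirect bracket `⁅(x,ξ),(y,η)⁆ = (⁅x,y⁆, ad*_x η − ad*_y ξ)` on `g × Dual g`. -/
noncomputable def sdBracket (a b : g × Module.Dual K g) : g × Module.Dual K g :=
  (⁅a.1, b.1⁆, coad a.1 b.2 - coad b.1 a.2)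

/-- The operator `B̃(x,ξ) = (Bx, −lam ξ − ξ∘B)` on `g × Dual g`. -/
noncomputable def Btilde (lam : K) (B : g →ₗ[K] g) (a : g × Module.Dual K g) :
    g × Module.Dual K g :=
  (B a.1, -(lam • a.2) - a.2 ∘ₗ B)

/-- The pairing `𝒮((x,ξ),(y,η)) = η(x) + ξ(y)` on `g × Dual g`. -/
noncomputable def Spair (a b : g × Module.Dual K g) : K :=
  b.2 a.1 + a.2 b.1

/-- `τ̃(x,ξ) = (τx, −ξ∘τ)` on `g × Dual g`. -/
noncomputable def tauTilde (τ : g ≃ₗ[K] g) (a : g × Module.Dual K g) :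
    g × Module.Dual K g :=
  (τ a.1, -(a.2 ∘ₗ (τ : g →ₗ[K] g)))

/-- For a Rota–Baxter operator `B` of weight `lam` on `g` and a Lie
algebra automorphism `τ` of `g`, the map `τ̃(x,ξ) = (τx, −ξ∘τ)` is a reflection on the
quadratic Rota–Baxter Lie algebra `(g ⋉_{ad*} Dual g, B̃, 𝒮)` if and only if `τ` is a
reflection on the Rota–Baxter Lie algebra `(g,B)`. -/
theorem stmt10 (lam : K) (B : g →ₗ[K] g)
    (hB : ∀ x y : g, ⁅B x, B y⁆ = B (⁅B x, y⁆ + ⁅x, B y⁆ + lam • ⁅x, y⁆))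
    (τ : g ≃ₗ[K] g)
    (hτbr : ∀ x y : g, τ ⁅x, y⁆ = ⁅τ x, τ y⁆) :
    -- `τ̃` is a reflection on `(g ⋉_{ad*} Dual g, B̃, 𝒮)` ...
    (Function.Bijective (tauTilde (K := K) τ) ∧
     (∀ a b : g × Module.Dual K g,
        tauTilde τ (sdBracket a b) = sdBracket (tauTilde τ a) (tauTilde τ b)) ∧
     (∀ a : g × Module.Dual K g,
        tauTilde τ (Btilde lam B (tauTilde τ a + a) + lam • (tauTilde τ a + a)) -
          (Btilde lam B (tauTilde τ a + a) + lam • (tauTilde τ a + a)) = 0) ∧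
     (∀ a b : g × Module.Dual K g,
        Spair (tauTilde τ a) b + Spair a (tauTilde τ b) = 0)) ↔
    -- ... iff `τ` is a reflection on `(g,B)`
    ((∀ x y : g, τ ⁅τ x, y⁆ = ⁅x, τ y⁆) ∧
     (∀ x : g, lam • (τ (τ x) - x) = 0) ∧
     (∀ x : g, τ (B (τ x)) - B x + τ (B x) - B (τ x) = 0)) := by
  constructor
  · rintro ⟨-, hbr, hrefl, -⟩
    have h3 : ∀ x : g, τ (B (τ x)) - B x + τ (B x) - B (τ x) = 0 := by
      intro y
      rw [← Module.forall_dual_apply_eq_zero_iff K]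
      intro ξ
      have h2 := congrArg (fun p : g × Module.Dual K g => p.2 y) (hrefl (0, ξ))
      simp only [tauTilde, Btilde, Prod.snd_add, Prod.fst_add, Prod.smul_snd,
        Prod.snd_zero, Prod.fst_zero, Prod.snd_sub, Prod.snd_neg] at h2
      simp only [map_add, map_sub, map_neg, map_smul, LinearMap.add_apply,
        LinearMap.sub_apply, LinearMap.neg_apply, LinearMap.smul_apply, LinearMap.comp_apply,
        LinearMap.coe_comp, Function.comp_apply, LinearEquiv.coe_coe, smul_eq_mul,
        LinearMap.zero_apply, Prod.snd_zero] at h2 ⊢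
      linear_combination -h2
    refine ⟨?_, ?_, h3⟩
    · intro x y
      rw [← sub_eq_zero, ← Module.forall_dual_apply_eq_zero_iff K]
      intro η
      have h := congrArg (fun p : g × Module.Dual K g => p.2 y) (hbr (x, 0) (0, η))
      simp [sdBracket, tauTilde, coad, LieAlgebra.ad_apply] at h
      simp only [map_sub]
      linear_combination -h
    · intro x
      have h1 := congrArg Prod.fst (hrefl (x, 0))
      simp [Btilde, tauTilde] at h1
      have h3' := h3 x
      linear_combination (norm := module) h1 - h3'
  · rintro ⟨h1, h2, h3⟩
    refine ⟨?_, ?_, ?_, ?_⟩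
    · refine Function.bijective_iff_has_inverse.mpr
        ⟨fun a => (τ.symm a.1, -(a.2 ∘ₗ (τ.symm : g →ₗ[K] g))), ?_, ?_⟩ <;>
      · intro a
        refine Prod.ext (by simp [tauTilde]) ?_
        ext z
        simp [tauTilde]
    · intro a b
      refine Prod.ext (hτbr _ _) ?_
      ext z
      simp only [sdBracket, tauTilde, coad, LieAlgebra.ad_apply, LinearMap.sub_apply,
        LinearMap.neg_apply, LinearMap.coe_comp, Function.comp_apply, LinearEquiv.coe_coe,
        map_sub, map_neg]
      rw [← h1 a.1 z, ← h1 b.1 z]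
      ring
    · intro a
      have hA := h3 a.1
      have hL : lam • τ (τ a.1) - lam • a.1 = 0 := by
        have := h2 a.1; rwa [smul_sub] at this
      refine Prod.ext ?_ ?_
      · simp only [tauTilde, Btilde, Prod.fst_add, Prod.fst_sub, Prod.smul_fst,
          Prod.fst_zero, map_add, map_smul]
        linear_combination (norm := module) hA + hL
      · ext z
        have hz := h3 z
        have hξ := congrArg a.2 hz
        simp only [map_add, map_sub, map_zero] at hξ
        simp only [tauTilde, Btilde, Prod.snd_add, Prod.fst_add, Prod.snd_sub,
          Prod.smul_snd, Prod.snd_zero, LinearMap.sub_apply, LinearMap.add_apply,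
          LinearMap.neg_apply, LinearMap.smul_apply, LinearMap.comp_apply,
          LinearMap.coe_comp, Function.comp_apply, LinearEquiv.coe_coe, map_add,
          map_sub, map_neg, map_smul, smul_eq_mul, LinearMap.zero_apply]
        linear_combination -hξ
    · intro a b
      simp [Spair, tauTilde]
      ring
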